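/- d-separation fails the amalgamation property: in the DAG 1→2←3→4←5 (the Cassiopeia graph), vertex 1 is d-separated from vertex 5 given {2}, and d-separated from 5 given {4}, but 1 is not d-separated from 5 given {2,4}. -/

import Mathlib

/-!  Common definitions: weighted DAGs, paths, critical paths,
critical DAGs and C*-separation, following Boege–Ferry–Hollering–Nowell,
"Polyhedral aspects of maxoids". -/

variable {V : Type*}

/-- `p` is a directed path (vertex list) from `i` to `j` in the digraph `E`. -/
def IsPath (E : V → V → Prop) (i j : V) (p : List V) : Prop :=
  p.head? = some i ∧ p.getLast? = some j ∧ List.Chain' E p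

/-- The weight of a path: the sum of the edge weights along consecutive vertices. -/
def pathWeight (c : V → V → ℝ) (p : List V) : ℝ :=
  ((p.zip p.tail).map fun q => c q.1 q.2).sum

/-- `p` is a critical (maximum-weight) path from `i` to `j`. -/
def IsCritical (E : V → V → Prop) (c : V → V → ℝ) (i j : V) (p : List V) : Prop :=
  IsPath E i j p ∧ ∀ q, IsPath E i j q → pathWeight c q ≤ pathWeight c p

/-- The internal vertices of a path (all but the two endpoints). -/
def internalVerts (p : List V) : List V := p.tail.dropLast

/-- Edge `i → j` of the critical DAG `D*(C,L)`: there is a directed `i`–`j`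
path in `G` and no critical `i`–`j` path has an internal vertex in `L`. -/
def critEdge (E : V → V → Prop) (c : V → V → ℝ) (L : Set V) (i j : V) : Prop :=
  (∃ p, IsPath E i j p) ∧
    ∀ p, IsCritical E c i j p → ∀ v ∈ internalVerts p, v ∉ L

/-- `i` and `j` are C*-connected given `L`: some path of one of the five
permitted shapes joins them in the critical DAG `D*(C,L)` (colliders must lie
in `L`, non-colliders outside `L`, at most one collider). -/
def starConn (E : V → V → Prop) (c : V → V → ℝ) (L : Set V) (i j : V) : Prop :=
  let D := critEdge E c L
  D i j ∨ D j i ∨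
  (∃ p, p ∉ L ∧ D p i ∧ D p j) ∨
  (∃ l, l ∈ L ∧ D i l ∧ D j l) ∨
  (∃ p l, p ∉ L ∧ l ∈ L ∧ D p i ∧ D p l ∧ D j l) ∨
  (∃ p l, p ∉ L ∧ l ∈ L ∧ D p j ∧ D p l ∧ D i l) ∨
  (∃ p q l, p ∉ L ∧ q ∉ L ∧ l ∈ L ∧ D p i ∧ D p l ∧ D q l ∧ D q j)

/-- C*-separation of two vertices given `L`. -/
def CSep (E : V → V → Prop) (c : V → V → ℝ) (L : Set V) (i j : V) : Prop :=
  ¬ starConn E c L i j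

/-- C*-connection of two sets of vertices given `L`. -/
def starConnSets (E : V → V → Prop) (c : V → V → ℝ) (L I J : Set V) : Prop :=
  ∃ i ∈ I, ∃ j ∈ J, starConn E c L i j

/-- C*-separation of two sets of vertices given `L`. -/
def CSepSets (E : V → V → Prop) (c : V → V → ℝ) (L I J : Set V) : Prop :=
  ¬ starConnSets E c L I J

/-- The digraph `E` is acyclic. -/
def IsAcyclic (E : V → V → Prop) : Prop := ∀ v, ¬ Relation.TransGen E v v

/-- A weight matrix is generic: between any two vertices the maximum-weight
path is unique whenever one exists. -/
def Generic (E : V → V → Prop) (c : V → V → ℝ) : Prop :=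
  ∀ i j p q, IsCritical E c i j p → IsCritical E c i j q → p = q

/-- The set of generic weight matrices inducing exactly the same critical
paths as `c`. -/
def sameCritSet (E : V → V → Prop) (c : V → V → ℝ) : Set (V → V → ℝ) :=
  {c' | Generic E c' ∧ ∀ i j p, IsCritical E c' i j p ↔ IsCritical E c i j p}

/-- `p` is an (undirected) trail from `i` to `j` in the digraph `E`. -/
def IsTrail (E : V → V → Prop) (i j : V) (p : List V) : Prop :=
  p.head? = some i ∧ p.getLast? = some j ∧
    List.Chain' (fun a b => E a b ∨ E b a) p

/-- A trail is d-connecting given `L`: every collider is in `L` or has a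
descendant in `L`, and every non-collider (internal node) is outside `L`. -/
def DConnecting (E : V → V → Prop) (L : Set V) (p : List V) : Prop :=
  ∀ n a v b, p[n]? = some a → p[n + 1]? = some v →
    p[n + 2]? = some b →
    ((E a v ∧ E b v) → ∃ w ∈ L, Relation.ReflTransGen E v w) ∧
    (¬ (E a v ∧ E b v) → v ∉ L)

/-- d-separation: no d-connecting trail exists. -/
def DSep (E : V → V → Prop) (L : Set V) (i j : V) : Prop :=
  ¬ ∃ p, IsTrail E i j p ∧ DConnecting E L p

/-- The Cassiopeia graph 1→2←3→4←5 on vertices `Fin 5` (0-indexed). -/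
def cassiopeiaE : Fin 5 → Fin 5 → Prop := fun a b =>
  (a = 0 ∧ b = 1) ∨ (a = 2 ∧ b = 1) ∨ (a = 2 ∧ b = 3) ∨ (a = 4 ∧ b = 3)

-- helpers
lemma no_out1 (x : Fin 5) : ¬ cassiopeiaE 1 x := by
  rintro (⟨h,-⟩|⟨h,-⟩|⟨h,-⟩|⟨h,-⟩) <;> exact absurd h (by decide)

lemma no_out3 (x : Fin 5) : ¬ cassiopeiaE 3 x := by
  rintro (⟨h,-⟩|⟨h,-⟩|⟨h,-⟩|⟨h,-⟩) <;> exact absurd h (by decide)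

lemma desc1 {w : Fin 5} (h : Relation.ReflTransGen cassiopeiaE 1 w) : w = 1 := by
  induction h with
  | refl => rfl
  | tail _ h2 ih => subst ih; exact absurd h2 (no_out1 _)

lemma desc3 {w : Fin 5} (h : Relation.ReflTransGen cassiopeiaE 3 w) : w = 3 := by
  induction h with
  | refl => rfl
  | tail _ h2 ih => subst ih; exact absurd h2 (no_out3 _)

lemma nbr0 {x : Fin 5} (h : cassiopeiaE 0 x ∨ cassiopeiaE x 0) : x = 1 := by
  rcases h with (⟨h1,h2⟩|⟨h1,h2⟩|⟨h1,h2⟩|⟨h1,h2⟩)|(⟨h1,h2⟩|⟨h1,h2⟩|⟨h1,h2⟩|⟨h1,h2⟩) <;>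
    first | exact h2 | exact absurd h1 (by decide) | exact absurd h2 (by decide)

lemma nbr4 {x : Fin 5} (h : cassiopeiaE 4 x ∨ cassiopeiaE x 4) : x = 3 := by
  rcases h with (⟨h1,h2⟩|⟨h1,h2⟩|⟨h1,h2⟩|⟨h1,h2⟩)|(⟨h1,h2⟩|⟨h1,h2⟩|⟨h1,h2⟩|⟨h1,h2⟩) <;>
    first | exact h2 | exact absurd h1 (by decide) | exact absurd h2 (by decide)

lemma into1 {x : Fin 5} (h : cassiopeiaE 1 x ∨ cassiopeiaE x 1) : cassiopeiaE x 1 :=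
  h.resolve_left (no_out1 _)

lemma into3 {x : Fin 5} (h : cassiopeiaE 3 x ∨ cassiopeiaE x 3) : cassiopeiaE x 3 :=
  h.resolve_left (no_out3 _)

lemma trail_reverse {E : V → V → Prop} {i j : V} {p : List V}
    (h : IsTrail E i j p) : IsTrail E j i p.reverse := by
  obtain ⟨h1, h2, h3⟩ := h
  refine ⟨?_, ?_, ?_⟩
  · rwa [List.head?_reverse]
  · rwa [List.getLast?_reverse]
  · change List.IsChain _ _ at h3 ⊢; rw [List.isChain_reverse]
    exact h3.imp fun a b hab => hab.symm

lemma dconn_reverse {E : V → V → Prop} {L : Set V} {p : List V}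
    (h : DConnecting E L p) : DConnecting E L p.reverse := by
  intro n a v b ha hv hb
  have hlen : n + 2 < p.length := by
    by_contra hc
    rw [List.getElem?_eq_none (by simpa using Nat.le_of_not_lt hc)] at hb
    exact absurd hb (by simp)
  have e0 : p[p.length - 1 - (n+2)]? = some b := by
    rw [← List.getElem?_reverse (by simpa using hlen)]; exact hb
  have e1 : p[p.length - 1 - (n+2) + 1]? = some v := by
    rw [
      show p.length - 1 - (n+2) + 1 = p.length - 1 - (n+1) by omega,
      ← List.getElem?_reverse (by omega)]
    exact hv
  have e2 : p[p.length - 1 - (n+2) + 2]? = some a := by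
    rw [
      show p.length - 1 - (n+2) + 2 = p.length - 1 - n by omega,
      ← List.getElem?_reverse (by omega)]
    exact ha
  obtain ⟨c1, c2⟩ := h _ _ _ _ e0 e1 e2
  exact ⟨fun hc => c1 ⟨hc.2, hc.1⟩, fun hc => c2 fun hc' => hc ⟨hc'.2, hc'.1⟩⟩

lemma head_contra {p : List (Fin 5)} {L : Set (Fin 5)} {s t m : Fin 5}
    (hnbr : ∀ x : Fin 5, cassiopeiaE s x ∨ cassiopeiaE x s → x = m)
    (hinto : ∀ x : Fin 5, cassiopeiaE m x ∨ cassiopeiaE x m → cassiopeiaE x m)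
    (hsm : cassiopeiaE s m)
    (hdesc : ∀ w : Fin 5, Relation.ReflTransGen cassiopeiaE m w → w = m)
    (hmL : m ∉ L) (hst : s ≠ t) (hmt : m ≠ t)
    (ht : IsTrail cassiopeiaE s t p) (hd : DConnecting cassiopeiaE L p) : False := by
  obtain ⟨h1, h2, h3⟩ := ht
  match p with
  | [] => exact absurd h1 (by simp)
  | [a] =>
    simp only [List.head?, List.getLast?] at h1 h2
    exact hst ((Option.some_inj.mp h1).symm.trans (Option.some_inj.mp h2))
  | a :: b :: q =>
    rw [List.head?_cons] at h1
    obtain rfl : a = s := Option.some_inj.mp h1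
    change List.IsChain _ _ at h3; rw [List.isChain_cons_cons] at h3
    have hb : b = m := hnbr b h3.1
    subst hb
    match q with
    | [] =>
      simp only [List.getLast?] at h2
      exact hmt (Option.some_inj.mp h2)
    | c :: q' =>
      rw [List.isChain_cons_cons] at h3
      obtain ⟨w, hwL, hw⟩ := (hd 0 _ _ c rfl rfl rfl).1 ⟨hsm, hinto c h3.2.1⟩
      rw [hdesc w hw] at hwL
      exact hmL hwL


/-- d-separation fails amalgamation on the Cassiopeia graph:
`1 ⊥ 5 | {2}` and `1 ⊥ 5 | {4}` hold, but `1 ⊥ 5 | {2,4}` fails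
(vertices 1,…,5 are `0,…,4 : Fin 5`). -/
theorem stmt13 :
    DSep cassiopeiaE ({1} : Set (Fin 5)) 0 4 ∧
    DSep cassiopeiaE ({3} : Set (Fin 5)) 0 4 ∧
    ¬ DSep cassiopeiaE ({1, 3} : Set (Fin 5)) 0 4 := by
  refine ⟨?_, ?_, ?_⟩
  · rintro ⟨p, ht, hd⟩
    exact head_contra (fun x => nbr4) (fun x => into3) (Or.inr (Or.inr (Or.inr ⟨rfl, rfl⟩)))
      (fun w => desc3) (by simp) (by decide) (by decide)
      (trail_reverse ht) (dconn_reverse hd)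
  · rintro ⟨p, ht, hd⟩
    exact head_contra (fun x => nbr0) (fun x => into1) (Or.inl ⟨rfl, rfl⟩)
      (fun w => desc1) (by simp) (by decide) (by decide) ht hd
  · intro h
    apply h
    refine ⟨[0, 1, 2, 3, 4], ⟨rfl, rfl, ?_⟩, ?_⟩
    · refine List.IsChain.cons_cons (Or.inl (Or.inl ⟨rfl, rfl⟩)) ?_
      refine List.IsChain.cons_cons (Or.inr (Or.inr (Or.inl ⟨rfl, rfl⟩))) ?_
      refine List.IsChain.cons_cons (Or.inl (Or.inr (Or.inr (Or.inl ⟨rfl, rfl⟩)))) ?_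
      exact List.IsChain.cons_cons (Or.inr (Or.inr (Or.inr (Or.inr ⟨rfl, rfl⟩)))) (List.isChain_singleton _)
    · intro n a v b ha hv hb
      match n with
      | 0 =>
        obtain rfl : a = 0 := Option.some_inj.mp ha.symm
        obtain rfl : v = 1 := Option.some_inj.mp hv.symm
        obtain rfl : b = 2 := Option.some_inj.mp hb.symm
        refine ⟨fun _ => ⟨1, by simp, Relation.ReflTransGen.refl⟩, fun hc => absurd ?_ hc⟩
        exact ⟨Or.inl ⟨rfl, rfl⟩, Or.inr (Or.inl ⟨rfl, rfl⟩)⟩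
      | 1 =>
        obtain rfl : a = 1 := Option.some_inj.mp ha.symm
        obtain rfl : v = 2 := Option.some_inj.mp hv.symm
        obtain rfl : b = 3 := Option.some_inj.mp hb.symm
        exact ⟨fun hc => absurd hc.1 (no_out1 _), fun _ => by simp⟩
      | 2 =>
        obtain rfl : a = 2 := Option.some_inj.mp ha.symm
        obtain rfl : v = 3 := Option.some_inj.mp hv.symm
        obtain rfl : b = 4 := Option.some_inj.mp hb.symm
        refine ⟨fun _ => ⟨3, by simp, Relation.ReflTransGen.refl⟩, fun hc => absurd ?_ hc⟩
        exact ⟨Or.inr (Or.inr (Or.inl ⟨rfl, rfl⟩)), Or.inr (Or.inr (Or.inr ⟨rfl, rfl⟩))⟩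
      | (k+3) => exact absurd hb (by simp)
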